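/- Directed information is bounded by mutual information: for any joint pmf on (X^N, Y^N), I(X^N → Y^N) ≤ I(X^N; Y^N). -/

import Mathlib

open Finset

/-- Prefix-matching probability under a joint pmf on pairs of sequences. -/
noncomputable def prefXY {X Y : Type*} [Fintype X] [Fintype Y]
    [DecidableEq X] [DecidableEq Y] {N : ℕ}
    (P : (Fin N → X) × (Fin N → Y) → ℝ) (k m : ℕ) (x : Fin N → X) (y : Fin N → Y) : ℝ :=
  ∑ t : (Fin N → X) × (Fin N → Y),
    if (∀ j : Fin N, (j : ℕ) < k → t.1 j = x j) ∧ (∀ j : Fin N, (j : ℕ) < m → t.2 j = y j)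
    then P t else 0

set_option linter.unusedSectionVars false

def padF {Z : Type*} {N : ℕ} (z0 : Z) (m : ℕ) (c : Fin N → Z) : Fin N → Z :=
  fun j => if (j : ℕ) < m then c j else z0

section Pad
variable {Z : Type*} [DecidableEq Z] {N : ℕ} (z0 : Z) (m : ℕ)

lemma padF_idem (c : Fin N → Z) : padF z0 m (padF z0 m c) = padF z0 m c := by
  funext j; unfold padF; split_ifs <;> simp_all [padF]

lemma padF_char (b c : Fin N → Z) :
    (padF z0 m c = c ∧ ∀ j : Fin N, (j : ℕ) < m → b j = c j) ↔ c = padF z0 m b := by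
  constructor
  · rintro ⟨h1, h2⟩
    funext j
    by_cases hj : (j : ℕ) < m
    · rw [padF, if_pos hj]; exact (h2 j hj).symm
    · have h3 := congrFun h1 j
      rw [padF] at h3
      rw [padF, if_neg hj, ← h3, if_neg hj]
  · rintro rfl
    refine ⟨padF_idem z0 m b, fun j hj => ?_⟩
    simp [padF, hj]

lemma count_pad (b : Fin N → Z) [Fintype Z] :
    ∑ c : Fin N → Z,
      (if padF z0 m c = c ∧ (∀ j : Fin N, (j : ℕ) < m → b j = c j) then (1 : ℝ) else 0) = 1 := by
  simp only [padF_char z0 m b]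
  simp

end Pad

section Aux
variable {X Y : Type*} [Fintype X] [Fintype Y] [DecidableEq X] [DecidableEq Y] {N : ℕ}
  (P : (Fin N → X) × (Fin N → Y) → ℝ)

lemma prefXY_pos (hpos : ∀ t, 0 < P t) (k m : ℕ) (x : Fin N → X) (y : Fin N → Y) :
    0 < prefXY P k m x y := by
  apply Finset.sum_pos' (fun t _ => by split_ifs; exacts [(hpos t).le, le_refl 0])
  exact ⟨(x, y), mem_univ _, by simp [hpos (x, y)]⟩

lemma prefXY_congr {k m : ℕ} {x x' : Fin N → X} {y y' : Fin N → Y}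
    (h1 : ∀ j : Fin N, (j : ℕ) < k → x j = x' j)
    (h2 : ∀ j : Fin N, (j : ℕ) < m → y j = y' j) :
    prefXY P k m x y = prefXY P k m x' y' := by
  unfold prefXY
  refine Finset.sum_congr rfl fun t _ => ?_
  refine if_congr (and_congr ?_ ?_) rfl rfl
  · exact forall_congr' fun j => imp_congr_right fun hj => by rw [h1 j hj]
  · exact forall_congr' fun j => imp_congr_right fun hj => by rw [h2 j hj]

lemma prefXY_zero_zero (hsum : ∑ t, P t = 1) (x : Fin N → X) (y : Fin N → Y) :
    prefXY P 0 0 x y = 1 := by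
  unfold prefXY; simp [hsum]

lemma prefXY_N_N (x : Fin N → X) (y : Fin N → Y) :
    prefXY P N N x y = P (x, y) := by
  unfold prefXY
  have : ∀ t : (Fin N → X) × (Fin N → Y),
      ((∀ j : Fin N, (j : ℕ) < N → t.1 j = x j) ∧ (∀ j : Fin N, (j : ℕ) < N → t.2 j = y j))
        ↔ t = (x, y) := by
    intro t
    constructor
    · rintro ⟨h1, h2⟩
      exact Prod.ext (funext fun j => h1 j j.isLt) (funext fun j => h2 j j.isLt)
    · rintro rfl; exact ⟨fun _ _ => rfl, fun _ _ => rfl⟩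
  simp only [this]
  simp

lemma prefXY_N_zero (x : Fin N → X) (y : Fin N → Y) :
    prefXY P N 0 x y = ∑ y' : Fin N → Y, P (x, y') := by
  unfold prefXY
  have : ∀ t : (Fin N → X) × (Fin N → Y),
      ((∀ j : Fin N, (j : ℕ) < N → t.1 j = x j) ∧ (∀ j : Fin N, (j : ℕ) < 0 → t.2 j = y j))
        ↔ t.1 = x := by
    intro t
    constructor
    · rintro ⟨h1, _⟩; exact funext fun j => h1 j j.isLt
    · rintro rfl; exact ⟨fun _ _ => rfl, fun j hj => absurd hj (by omega)⟩
  simp only [this]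
  rw [Fintype.sum_prod_type, Finset.sum_comm]
  simp [Finset.sum_ite_eq']

lemma prefXY_zero_N (x : Fin N → X) (y : Fin N → Y) :
    prefXY P 0 N x y = ∑ x' : Fin N → X, P (x', y) := by
  unfold prefXY
  have : ∀ t : (Fin N → X) × (Fin N → Y),
      ((∀ j : Fin N, (j : ℕ) < 0 → t.1 j = x j) ∧ (∀ j : Fin N, (j : ℕ) < N → t.2 j = y j))
        ↔ t.2 = y := by
    intro t
    constructor
    · rintro ⟨_, h2⟩; exact funext fun j => h2 j j.isLt
    · rintro rfl; exact ⟨fun j hj => absurd hj (by omega), fun _ _ => rfl⟩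
  simp only [this]
  rw [Fintype.sum_prod_type_right, Finset.sum_comm]
  simp [Finset.sum_ite_eq']

end Aux

section SumPad
variable {X Y : Type*} [Fintype X] [Fintype Y] [DecidableEq X] [DecidableEq Y] {N : ℕ}
  (P : (Fin N → X) × (Fin N → Y) → ℝ)

lemma sum_pad_snd (y0 : Y) (a m : ℕ) (x : Fin N → X) :
    ∑ c2 : Fin N → Y, (if padF y0 m c2 = c2 then prefXY P a m x c2 else 0)
      = prefXY P a 0 x (fun _ => y0) := by
  have step1 : ∀ c2 : Fin N → Y,
      (if padF y0 m c2 = c2 then prefXY P a m x c2 else 0)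
      = ∑ t : (Fin N → X) × (Fin N → Y),
          (if (∀ j : Fin N, (j : ℕ) < a → t.1 j = x j) then P t else 0) *
          (if padF y0 m c2 = c2 ∧ (∀ j : Fin N, (j : ℕ) < m → t.2 j = c2 j) then (1:ℝ) else 0) := by
    intro c2
    split_ifs with h
    · unfold prefXY
      refine Finset.sum_congr rfl fun t _ => ?_
      simp only [h, true_and]
      split_ifs <;> simp_all
    · simp [h]
  simp only [step1]
  rw [Finset.sum_comm]
  have step2 : ∀ t : (Fin N → X) × (Fin N → Y),
      ∑ c2 : Fin N → Y,
        (if (∀ j : Fin N, (j : ℕ) < a → t.1 j = x j) then P t else 0) *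
        (if padF y0 m c2 = c2 ∧ (∀ j : Fin N, (j : ℕ) < m → t.2 j = c2 j) then (1:ℝ) else 0)
      = (if (∀ j : Fin N, (j : ℕ) < a → t.1 j = x j) then P t else 0) := by
    intro t
    rw [← Finset.mul_sum, count_pad y0 m t.2, mul_one]
  simp only [step2]
  unfold prefXY
  refine Finset.sum_congr rfl fun t _ => ?_
  refine (if_congr ?_ rfl rfl).symm
  simp

lemma sum_pad_fst (x0 : X) (a m : ℕ) (y : Fin N → Y) :
    ∑ c1 : Fin N → X, (if padF x0 m c1 = c1 then prefXY P m a c1 y else 0)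
      = prefXY P 0 a (fun _ => x0) y := by
  have step1 : ∀ c1 : Fin N → X,
      (if padF x0 m c1 = c1 then prefXY P m a c1 y else 0)
      = ∑ t : (Fin N → X) × (Fin N → Y),
          (if (∀ j : Fin N, (j : ℕ) < a → t.2 j = y j) then P t else 0) *
          (if padF x0 m c1 = c1 ∧ (∀ j : Fin N, (j : ℕ) < m → t.1 j = c1 j) then (1:ℝ) else 0) := by
    intro c1
    split_ifs with h
    · unfold prefXY
      refine Finset.sum_congr rfl fun t _ => ?_
      simp only [h, true_and]
      split_ifs <;> simp_all
    · simp [h]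
  simp only [step1]
  rw [Finset.sum_comm]
  have step2 : ∀ t : (Fin N → X) × (Fin N → Y),
      ∑ c1 : Fin N → X,
        (if (∀ j : Fin N, (j : ℕ) < a → t.2 j = y j) then P t else 0) *
        (if padF x0 m c1 = c1 ∧ (∀ j : Fin N, (j : ℕ) < m → t.1 j = c1 j) then (1:ℝ) else 0)
      = (if (∀ j : Fin N, (j : ℕ) < a → t.2 j = y j) then P t else 0) := by
    intro t
    rw [← Finset.mul_sum, count_pad x0 m t.1, mul_one]
  simp only [step2]
  unfold prefXY
  refine Finset.sum_congr rfl fun t _ => ?_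
  refine (if_congr ?_ rfl rfl).symm
  simp

end SumPad

section Key
variable {X Y : Type*} [Fintype X] [Fintype Y] [DecidableEq X] [DecidableEq Y] {N : ℕ}
  (P : (Fin N → X) × (Fin N → Y) → ℝ)

lemma key_identity (hpos : ∀ t, 0 < P t) (hsum : ∑ t, P t = 1) (x0 : X) (y0 : Y) (k : ℕ) :
    ∑ t : (Fin N → X) × (Fin N → Y),
      P t * (prefXY P k k t.1 t.2 * prefXY P (k + 1) 0 t.1 t.2 /
        (prefXY P (k + 1) k t.1 t.2 * prefXY P k 0 t.1 t.2)) = 1 := by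
  classical
  set φ : (Fin N → X) × (Fin N → Y) → (Fin N → X) × (Fin N → Y) :=
    fun t => (padF x0 (k + 1) t.1, padF y0 k t.2) with hφ
  have hx : ∀ (a : ℕ), a ≤ k + 1 → ∀ (x : Fin N → X) (j : Fin N), (j : ℕ) < a →
      x j = padF x0 (k + 1) x j := by
    intro a ha x j hj
    simp only [padF]
    rw [if_pos (lt_of_lt_of_le hj ha)]
  have hy : ∀ (a : ℕ), a ≤ k → ∀ (y : Fin N → Y) (j : Fin N), (j : ℕ) < a →
      y j = padF y0 k y j := by
    intro a ha y j hj
    simp only [padF]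
    rw [if_pos (lt_of_lt_of_le hj ha)]
  -- step 1: replace arguments by padded versions
  have step1 : ∀ t : (Fin N → X) × (Fin N → Y),
      prefXY P k k t.1 t.2 * prefXY P (k + 1) 0 t.1 t.2 /
        (prefXY P (k + 1) k t.1 t.2 * prefXY P k 0 t.1 t.2)
      = prefXY P k k (φ t).1 (φ t).2 * prefXY P (k + 1) 0 (φ t).1 (φ t).2 /
        (prefXY P (k + 1) k (φ t).1 (φ t).2 * prefXY P k 0 (φ t).1 (φ t).2) := by
    intro t
    rw [prefXY_congr P (hx k (Nat.le_succ k) t.1) (hy k le_rfl t.2),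
        prefXY_congr P (hx (k + 1) le_rfl t.1)
          (fun j (hj : (j : ℕ) < 0) => absurd hj (by omega) : ∀ j : Fin N, (j : ℕ) < 0 → t.2 j = padF y0 k t.2 j),
        prefXY_congr P (hx (k + 1) le_rfl t.1) (hy k le_rfl t.2),
        prefXY_congr P (hx k (Nat.le_succ k) t.1)
          (fun j (hj : (j : ℕ) < 0) => absurd hj (by omega) : ∀ j : Fin N, (j : ℕ) < 0 → t.2 j = padF y0 k t.2 j)]
  -- step 2: fiberwise grouping
  have hfib := Finset.sum_fiberwise (univ : Finset ((Fin N → X) × (Fin N → Y))) φ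
    (fun t => P t * (prefXY P k k (φ t).1 (φ t).2 * prefXY P (k + 1) 0 (φ t).1 (φ t).2 /
        (prefXY P (k + 1) k (φ t).1 (φ t).2 * prefXY P k 0 (φ t).1 (φ t).2)))
  have inner : ∀ c : (Fin N → X) × (Fin N → Y),
      (∑ t ∈ univ.filter (fun t => φ t = c),
        P t * (prefXY P k k (φ t).1 (φ t).2 * prefXY P (k + 1) 0 (φ t).1 (φ t).2 /
          (prefXY P (k + 1) k (φ t).1 (φ t).2 * prefXY P k 0 (φ t).1 (φ t).2)))
      = (if padF x0 (k + 1) c.1 = c.1 ∧ padF y0 k c.2 = c.2 then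
          prefXY P k k c.1 c.2 * (prefXY P (k + 1) 0 c.1 (fun _ => y0) /
            prefXY P k 0 c.1 (fun _ => y0)) else 0) := by
    intro c
    by_cases hc : padF x0 (k + 1) c.1 = c.1 ∧ padF y0 k c.2 = c.2
    · rw [if_pos hc]
      have congr1 : ∀ t ∈ univ.filter (fun t => φ t = c),
          P t * (prefXY P k k (φ t).1 (φ t).2 * prefXY P (k + 1) 0 (φ t).1 (φ t).2 /
            (prefXY P (k + 1) k (φ t).1 (φ t).2 * prefXY P k 0 (φ t).1 (φ t).2))
          = P t * (prefXY P k k c.1 c.2 * prefXY P (k + 1) 0 c.1 c.2 /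
            (prefXY P (k + 1) k c.1 c.2 * prefXY P k 0 c.1 c.2)) := by
        intro t ht
        rw [(mem_filter.mp ht).2]
      rw [Finset.sum_congr rfl congr1, ← Finset.sum_mul]
      have hfilter : univ.filter (fun t => φ t = c)
          = univ.filter (fun t : (Fin N → X) × (Fin N → Y) =>
              (∀ j : Fin N, (j : ℕ) < k + 1 → t.1 j = c.1 j) ∧
              (∀ j : Fin N, (j : ℕ) < k → t.2 j = c.2 j)) := by
        ext t
        simp only [mem_filter, mem_univ, true_and]
        constructor
        · rintro rfl
          exact ⟨fun j hj => (hx (k + 1) le_rfl t.1 j hj), fun j hj => (hy k le_rfl t.2 j hj)⟩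
        · rintro ⟨h1, h2⟩
          have e1 : padF x0 (k + 1) t.1 = c.1 := by
            funext j
            by_cases hj : (j : ℕ) < k + 1
            · rw [← hx (k + 1) le_rfl t.1 j hj]; exact h1 j hj
            · have := congrFun hc.1 j
              simp only [padF, if_neg hj] at this ⊢
              exact this
          have e2 : padF y0 k t.2 = c.2 := by
            funext j
            by_cases hj : (j : ℕ) < k
            · rw [← hy k le_rfl t.2 j hj]; exact h2 j hj
            · have := congrFun hc.2 j
              simp only [padF, if_neg hj] at this ⊢
              exact this
          exact Prod.ext e1 e2
      have hsumfilter : (∑ t ∈ univ.filter (fun t => φ t = c), P t)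
          = prefXY P (k + 1) k c.1 c.2 := by
        rw [hfilter, Finset.sum_filter]
        rfl
      rw [hsumfilter]
      have e1 : prefXY P (k + 1) 0 c.1 c.2 = prefXY P (k + 1) 0 c.1 (fun _ => y0) :=
        prefXY_congr P (fun _ _ => rfl) (fun j hj => absurd hj (by omega))
      have e2 : prefXY P k 0 c.1 c.2 = prefXY P k 0 c.1 (fun _ => y0) :=
        prefXY_congr P (fun _ _ => rfl) (fun j hj => absurd hj (by omega))
      rw [e1, e2]
      have hB := (prefXY_pos P hpos (k + 1) k c.1 c.2).ne'
      have hC := (prefXY_pos P hpos k 0 c.1 (fun _ => y0)).ne'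
      field_simp
    · rw [if_neg hc]
      have : univ.filter (fun t => φ t = c) = ∅ := by
        refine Finset.filter_eq_empty_iff.mpr fun t _ h => hc ?_
        rw [← h]
        exact ⟨padF_idem x0 (k + 1) t.1, padF_idem y0 k t.2⟩
      rw [this, Finset.sum_empty]
  -- assemble
  calc ∑ t : (Fin N → X) × (Fin N → Y),
      P t * (prefXY P k k t.1 t.2 * prefXY P (k + 1) 0 t.1 t.2 /
        (prefXY P (k + 1) k t.1 t.2 * prefXY P k 0 t.1 t.2))
      = ∑ t : (Fin N → X) × (Fin N → Y),
        P t * (prefXY P k k (φ t).1 (φ t).2 * prefXY P (k + 1) 0 (φ t).1 (φ t).2 /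
          (prefXY P (k + 1) k (φ t).1 (φ t).2 * prefXY P k 0 (φ t).1 (φ t).2)) := by
        exact Finset.sum_congr rfl fun t _ => by rw [step1 t]
    _ = ∑ c : (Fin N → X) × (Fin N → Y),
        (if padF x0 (k + 1) c.1 = c.1 ∧ padF y0 k c.2 = c.2 then
          prefXY P k k c.1 c.2 * (prefXY P (k + 1) 0 c.1 (fun _ => y0) /
            prefXY P k 0 c.1 (fun _ => y0)) else 0) := by
        rw [← hfib]
        exact Finset.sum_congr rfl fun c _ => inner c
    _ = ∑ c1 : Fin N → X, ∑ c2 : Fin N → Y,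
        (if padF x0 (k + 1) c1 = c1 ∧ padF y0 k c2 = c2 then
          prefXY P k k c1 c2 * (prefXY P (k + 1) 0 c1 (fun _ => y0) /
            prefXY P k 0 c1 (fun _ => y0)) else 0) := by
        rw [Fintype.sum_prod_type]
    _ = ∑ c1 : Fin N → X,
        (if padF x0 (k + 1) c1 = c1 then prefXY P (k + 1) 0 c1 (fun _ => y0) else 0) := by
        refine Finset.sum_congr rfl fun c1 _ => ?_
        by_cases h1 : padF x0 (k + 1) c1 = c1
        · rw [if_pos h1]
          have : ∀ c2 : Fin N → Y,
              (if padF x0 (k + 1) c1 = c1 ∧ padF y0 k c2 = c2 then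
                prefXY P k k c1 c2 * (prefXY P (k + 1) 0 c1 (fun _ => y0) /
                  prefXY P k 0 c1 (fun _ => y0)) else 0)
              = (if padF y0 k c2 = c2 then prefXY P k k c1 c2 else 0) *
                (prefXY P (k + 1) 0 c1 (fun _ => y0) / prefXY P k 0 c1 (fun _ => y0)) := by
            intro c2
            by_cases h2 : padF y0 k c2 = c2 <;> simp [h1, h2]
          rw [Finset.sum_congr rfl fun c2 _ => this c2, ← Finset.sum_mul,
            sum_pad_snd P y0 k k c1]
          rw [mul_div_cancel₀]
          exact (prefXY_pos P hpos k 0 c1 (fun _ => y0)).ne'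
        · rw [if_neg h1]
          refine Finset.sum_eq_zero fun c2 _ => ?_
          rw [if_neg]
          exact fun hcon => h1 hcon.1
    _ = prefXY P 0 0 (fun _ => x0) (fun _ => y0) := sum_pad_fst P x0 0 (k + 1) (fun _ => y0)
    _ = 1 := prefXY_zero_zero P hsum _ _

end Key


/-- Directed information is bounded by mutual information: for any joint pmf on
`(X^N, Y^N)` (assumed positive so all conditionals are well-defined),
`I(X^N → Y^N) = ∑_{i=1}^N I(X^i; Y_i | Y^{i-1}) ≤ I(X^N; Y^N)`. -/
theorem directed_information_le_mutual_information
    {X Y : Type*} [Fintype X] [Fintype Y] [DecidableEq X] [DecidableEq Y]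
    (N : ℕ) (hN : 0 < N)
    (P : (Fin N → X) × (Fin N → Y) → ℝ)
    (hpos : ∀ t, 0 < P t) (hsum : ∑ t, P t = 1) :
    (∑ i : Fin N, ∑ t : (Fin N → X) × (Fin N → Y),
        P t * Real.log
          (prefXY P ((i : ℕ) + 1) ((i : ℕ) + 1) t.1 t.2 * prefXY P 0 (i : ℕ) t.1 t.2 /
            (prefXY P ((i : ℕ) + 1) (i : ℕ) t.1 t.2 * prefXY P 0 ((i : ℕ) + 1) t.1 t.2)))
    ≤ ∑ t : (Fin N → X) × (Fin N → Y),
        P t * Real.log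
          (P t / ((∑ y' : Fin N → Y, P (t.1, y')) * (∑ x' : Fin N → X, P (x', t.2)))) := by
  classical
  have hne : Nonempty ((Fin N → X) × (Fin N → Y)) := by
    by_contra h
    rw [not_nonempty_iff] at h
    rw [Finset.univ_eq_empty, Finset.sum_empty] at hsum
    exact one_ne_zero hsum.symm
  obtain ⟨t0⟩ := hne
  have hneX : Nonempty (Fin N → X) := ⟨t0.1⟩
  have hneY : Nonempty (Fin N → Y) := ⟨t0.2⟩
  have x0 : X := t0.1 ⟨0, hN⟩
  have y0 : Y := t0.2 ⟨0, hN⟩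
  have ppos : ∀ (k m : ℕ) (x : Fin N → X) (y : Fin N → Y), 0 < prefXY P k m x y :=
    fun k m x y => prefXY_pos P hpos k m x y
  -- nonnegativity of each conditional mutual information term
  have hT : ∀ i : ℕ, 0 ≤ ∑ t : (Fin N → X) × (Fin N → Y),
      P t * (Real.log (prefXY P (i + 1) i t.1 t.2) + Real.log (prefXY P i 0 t.1 t.2)
        - Real.log (prefXY P i i t.1 t.2) - Real.log (prefXY P (i + 1) 0 t.1 t.2)) := by
    intro i
    have hexpr : ∀ t : (Fin N → X) × (Fin N → Y),
        P t * (Real.log (prefXY P (i + 1) i t.1 t.2) + Real.log (prefXY P i 0 t.1 t.2)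
          - Real.log (prefXY P i i t.1 t.2) - Real.log (prefXY P (i + 1) 0 t.1 t.2))
        = -(P t * Real.log (prefXY P i i t.1 t.2 * prefXY P (i + 1) 0 t.1 t.2 /
            (prefXY P (i + 1) i t.1 t.2 * prefXY P i 0 t.1 t.2))) := by
      intro t
      rw [Real.log_div (mul_pos (ppos i i t.1 t.2) (ppos (i + 1) 0 t.1 t.2)).ne'
          (mul_pos (ppos (i + 1) i t.1 t.2) (ppos i 0 t.1 t.2)).ne',
        Real.log_mul (ppos i i t.1 t.2).ne' (ppos (i + 1) 0 t.1 t.2).ne',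
        Real.log_mul (ppos (i + 1) i t.1 t.2).ne' (ppos i 0 t.1 t.2).ne']
      ring
    have hle : ∑ t : (Fin N → X) × (Fin N → Y),
        P t * Real.log (prefXY P i i t.1 t.2 * prefXY P (i + 1) 0 t.1 t.2 /
          (prefXY P (i + 1) i t.1 t.2 * prefXY P i 0 t.1 t.2)) ≤ 0 := by
      have h1 : ∑ t : (Fin N → X) × (Fin N → Y),
          P t * Real.log (prefXY P i i t.1 t.2 * prefXY P (i + 1) 0 t.1 t.2 /
            (prefXY P (i + 1) i t.1 t.2 * prefXY P i 0 t.1 t.2))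
          ≤ ∑ t : (Fin N → X) × (Fin N → Y),
          P t * ((prefXY P i i t.1 t.2 * prefXY P (i + 1) 0 t.1 t.2 /
            (prefXY P (i + 1) i t.1 t.2 * prefXY P i 0 t.1 t.2)) - 1) := by
        refine Finset.sum_le_sum fun t _ => mul_le_mul_of_nonneg_left
          (Real.log_le_sub_one_of_pos ?_) (hpos t).le
        have := ppos i i t.1 t.2
        have := ppos (i + 1) 0 t.1 t.2
        have := ppos (i + 1) i t.1 t.2
        have := ppos i 0 t.1 t.2
        positivity
      have h2 : ∑ t : (Fin N → X) × (Fin N → Y),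
          P t * ((prefXY P i i t.1 t.2 * prefXY P (i + 1) 0 t.1 t.2 /
            (prefXY P (i + 1) i t.1 t.2 * prefXY P i 0 t.1 t.2)) - 1) = 0 := by
        have hk := key_identity P hpos hsum x0 y0 i
        calc ∑ t : (Fin N → X) × (Fin N → Y),
            P t * ((prefXY P i i t.1 t.2 * prefXY P (i + 1) 0 t.1 t.2 /
              (prefXY P (i + 1) i t.1 t.2 * prefXY P i 0 t.1 t.2)) - 1)
            = (∑ t : (Fin N → X) × (Fin N → Y),
                P t * (prefXY P i i t.1 t.2 * prefXY P (i + 1) 0 t.1 t.2 /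
                  (prefXY P (i + 1) i t.1 t.2 * prefXY P i 0 t.1 t.2)))
              - ∑ t : (Fin N → X) × (Fin N → Y), P t := by
              rw [← Finset.sum_sub_distrib]
              exact Finset.sum_congr rfl fun t _ => by ring
          _ = 1 - 1 := by rw [hk, hsum]
          _ = 0 := by ring
      linarith
    have : ∑ t : (Fin N → X) × (Fin N → Y),
        P t * (Real.log (prefXY P (i + 1) i t.1 t.2) + Real.log (prefXY P i 0 t.1 t.2)
          - Real.log (prefXY P i i t.1 t.2) - Real.log (prefXY P (i + 1) 0 t.1 t.2))
        = -∑ t : (Fin N → X) × (Fin N → Y),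
          P t * Real.log (prefXY P i i t.1 t.2 * prefXY P (i + 1) 0 t.1 t.2 /
            (prefXY P (i + 1) i t.1 t.2 * prefXY P i 0 t.1 t.2)) := by
      rw [← Finset.sum_neg_distrib]
      exact Finset.sum_congr rfl fun t _ => hexpr t
    rw [this]
    linarith
  -- pointwise telescoping identity
  have hptw : ∀ t : (Fin N → X) × (Fin N → Y),
      (∑ i ∈ Finset.range N,
        (Real.log (prefXY P (i + 1) (i + 1) t.1 t.2) + Real.log (prefXY P 0 i t.1 t.2)
          - Real.log (prefXY P (i + 1) i t.1 t.2) - Real.log (prefXY P 0 (i + 1) t.1 t.2)))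
      + (∑ i ∈ Finset.range N,
        (Real.log (prefXY P (i + 1) i t.1 t.2) + Real.log (prefXY P i 0 t.1 t.2)
          - Real.log (prefXY P i i t.1 t.2) - Real.log (prefXY P (i + 1) 0 t.1 t.2)))
      = Real.log (prefXY P N N t.1 t.2) - Real.log (prefXY P N 0 t.1 t.2)
        - Real.log (prefXY P 0 N t.1 t.2) := by
    intro t
    have e1 : ∑ i ∈ Finset.range N,
        (Real.log (prefXY P (i + 1) (i + 1) t.1 t.2) - Real.log (prefXY P i i t.1 t.2))
        = Real.log (prefXY P N N t.1 t.2) - Real.log (prefXY P 0 0 t.1 t.2) :=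
      Finset.sum_range_sub (fun n => Real.log (prefXY P n n t.1 t.2)) N
    have e2 : ∑ i ∈ Finset.range N,
        (Real.log (prefXY P 0 (i + 1) t.1 t.2) - Real.log (prefXY P 0 i t.1 t.2))
        = Real.log (prefXY P 0 N t.1 t.2) - Real.log (prefXY P 0 0 t.1 t.2) :=
      Finset.sum_range_sub (fun n => Real.log (prefXY P 0 n t.1 t.2)) N
    have e3 : ∑ i ∈ Finset.range N,
        (Real.log (prefXY P (i + 1) 0 t.1 t.2) - Real.log (prefXY P i 0 t.1 t.2))
        = Real.log (prefXY P N 0 t.1 t.2) - Real.log (prefXY P 0 0 t.1 t.2) :=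
      Finset.sum_range_sub (fun n => Real.log (prefXY P n 0 t.1 t.2)) N
    have h0 : Real.log (prefXY P 0 0 t.1 t.2) = 0 := by
      rw [prefXY_zero_zero P hsum]; exact Real.log_one
    rw [← Finset.sum_add_distrib]
    have hc : ∑ i ∈ Finset.range N,
        ((Real.log (prefXY P (i + 1) (i + 1) t.1 t.2) + Real.log (prefXY P 0 i t.1 t.2)
          - Real.log (prefXY P (i + 1) i t.1 t.2) - Real.log (prefXY P 0 (i + 1) t.1 t.2))
        + (Real.log (prefXY P (i + 1) i t.1 t.2) + Real.log (prefXY P i 0 t.1 t.2)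
          - Real.log (prefXY P i i t.1 t.2) - Real.log (prefXY P (i + 1) 0 t.1 t.2)))
        = ∑ i ∈ Finset.range N,
        ((Real.log (prefXY P (i + 1) (i + 1) t.1 t.2) - Real.log (prefXY P i i t.1 t.2))
          - (Real.log (prefXY P 0 (i + 1) t.1 t.2) - Real.log (prefXY P 0 i t.1 t.2))
          - (Real.log (prefXY P (i + 1) 0 t.1 t.2) - Real.log (prefXY P i 0 t.1 t.2))) :=
      Finset.sum_congr rfl fun i _ => by ring
    rw [hc, Finset.sum_sub_distrib, Finset.sum_sub_distrib, e1, e2, e3, h0]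
    ring
  -- rewrite the right-hand side of the goal
  have hM1 : ∀ t : (Fin N → X) × (Fin N → Y), (0:ℝ) < ∑ y' : Fin N → Y, P (t.1, y') :=
    fun t => Finset.sum_pos (fun y' _ => hpos (t.1, y')) Finset.univ_nonempty
  have hM2 : ∀ t : (Fin N → X) × (Fin N → Y), (0:ℝ) < ∑ x' : Fin N → X, P (x', t.2) :=
    fun t => Finset.sum_pos (fun x' _ => hpos (x', t.2)) Finset.univ_nonempty
  have hRHS : ∀ t : (Fin N → X) × (Fin N → Y),
      Real.log (P t / ((∑ y' : Fin N → Y, P (t.1, y')) * (∑ x' : Fin N → X, P (x', t.2))))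
      = Real.log (prefXY P N N t.1 t.2) - Real.log (prefXY P N 0 t.1 t.2)
        - Real.log (prefXY P 0 N t.1 t.2) := by
    intro t
    rw [prefXY_N_N P t.1 t.2, prefXY_N_zero P t.1 t.2, prefXY_zero_N P t.1 t.2,
      Real.log_div (hpos t).ne' (mul_pos (hM1 t) (hM2 t)).ne',
      Real.log_mul (hM1 t).ne' (hM2 t).ne']
    simp only [Prod.mk.eta]
    ring
  -- rewrite the left-hand side summand of the goal
  have hLlog : ∀ (n : ℕ) (t : (Fin N → X) × (Fin N → Y)),
      Real.log (prefXY P (n + 1) (n + 1) t.1 t.2 * prefXY P 0 n t.1 t.2 /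
        (prefXY P (n + 1) n t.1 t.2 * prefXY P 0 (n + 1) t.1 t.2))
      = Real.log (prefXY P (n + 1) (n + 1) t.1 t.2) + Real.log (prefXY P 0 n t.1 t.2)
        - Real.log (prefXY P (n + 1) n t.1 t.2) - Real.log (prefXY P 0 (n + 1) t.1 t.2) := by
    intro n t
    rw [Real.log_div (mul_pos (ppos (n + 1) (n + 1) t.1 t.2) (ppos 0 n t.1 t.2)).ne'
        (mul_pos (ppos (n + 1) n t.1 t.2) (ppos 0 (n + 1) t.1 t.2)).ne',
      Real.log_mul (ppos (n + 1) (n + 1) t.1 t.2).ne' (ppos 0 n t.1 t.2).ne',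
      Real.log_mul (ppos (n + 1) n t.1 t.2).ne' (ppos 0 (n + 1) t.1 t.2).ne']
    ring
  -- convert Fin-sum to range-sum
  have hfin : (∑ i : Fin N, ∑ t : (Fin N → X) × (Fin N → Y),
        P t * Real.log
          (prefXY P ((i : ℕ) + 1) ((i : ℕ) + 1) t.1 t.2 * prefXY P 0 (i : ℕ) t.1 t.2 /
            (prefXY P ((i : ℕ) + 1) (i : ℕ) t.1 t.2 * prefXY P 0 ((i : ℕ) + 1) t.1 t.2)))
      = ∑ i ∈ Finset.range N, ∑ t : (Fin N → X) × (Fin N → Y),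
        P t * Real.log
          (prefXY P (i + 1) (i + 1) t.1 t.2 * prefXY P 0 i t.1 t.2 /
            (prefXY P (i + 1) i t.1 t.2 * prefXY P 0 (i + 1) t.1 t.2)) :=
    Fin.sum_univ_eq_sum_range (fun n => ∑ t : (Fin N → X) × (Fin N → Y),
      P t * Real.log
        (prefXY P (n + 1) (n + 1) t.1 t.2 * prefXY P 0 n t.1 t.2 /
          (prefXY P (n + 1) n t.1 t.2 * prefXY P 0 (n + 1) t.1 t.2))) N
  rw [hfin]
  rw [Finset.sum_congr rfl fun t (_ : t ∈ (Finset.univ : Finset ((Fin N → X) × (Fin N → Y)))) =>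
    congrArg (fun z => P t * z) (hRHS t)]
  rw [Finset.sum_congr rfl fun (i : ℕ) (_ : i ∈ Finset.range N) =>
    Finset.sum_congr rfl fun t (_ : t ∈ (Finset.univ : Finset ((Fin N → X) × (Fin N → Y)))) =>
      congrArg (fun z => P t * z) (hLlog i t)]
  -- final assembly
  have hkey : (∑ i ∈ Finset.range N, ∑ t : (Fin N → X) × (Fin N → Y),
        P t * (Real.log (prefXY P (i + 1) (i + 1) t.1 t.2) + Real.log (prefXY P 0 i t.1 t.2)
          - Real.log (prefXY P (i + 1) i t.1 t.2) - Real.log (prefXY P 0 (i + 1) t.1 t.2)))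
      + (∑ i ∈ Finset.range N, ∑ t : (Fin N → X) × (Fin N → Y),
        P t * (Real.log (prefXY P (i + 1) i t.1 t.2) + Real.log (prefXY P i 0 t.1 t.2)
          - Real.log (prefXY P i i t.1 t.2) - Real.log (prefXY P (i + 1) 0 t.1 t.2)))
      = ∑ t : (Fin N → X) × (Fin N → Y),
        P t * (Real.log (prefXY P N N t.1 t.2) - Real.log (prefXY P N 0 t.1 t.2)
          - Real.log (prefXY P 0 N t.1 t.2)) := by
    rw [← Finset.sum_add_distrib]
    have hswap : ∀ i ∈ Finset.range N,
        (∑ t : (Fin N → X) × (Fin N → Y),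
          P t * (Real.log (prefXY P (i + 1) (i + 1) t.1 t.2) + Real.log (prefXY P 0 i t.1 t.2)
            - Real.log (prefXY P (i + 1) i t.1 t.2) - Real.log (prefXY P 0 (i + 1) t.1 t.2)))
        + (∑ t : (Fin N → X) × (Fin N → Y),
          P t * (Real.log (prefXY P (i + 1) i t.1 t.2) + Real.log (prefXY P i 0 t.1 t.2)
            - Real.log (prefXY P i i t.1 t.2) - Real.log (prefXY P (i + 1) 0 t.1 t.2)))
        = ∑ t : (Fin N → X) × (Fin N → Y),
          P t * ((Real.log (prefXY P (i + 1) (i + 1) t.1 t.2) + Real.log (prefXY P 0 i t.1 t.2)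
            - Real.log (prefXY P (i + 1) i t.1 t.2) - Real.log (prefXY P 0 (i + 1) t.1 t.2))
          + (Real.log (prefXY P (i + 1) i t.1 t.2) + Real.log (prefXY P i 0 t.1 t.2)
            - Real.log (prefXY P i i t.1 t.2) - Real.log (prefXY P (i + 1) 0 t.1 t.2))) := by
      intro i _
      rw [← Finset.sum_add_distrib]
      exact Finset.sum_congr rfl fun t _ => by ring
    rw [Finset.sum_congr rfl hswap, Finset.sum_comm]
    refine Finset.sum_congr rfl fun t _ => ?_
    rw [← Finset.mul_sum, Finset.sum_add_distrib, hptw t]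
  have hTsum : 0 ≤ ∑ i ∈ Finset.range N, ∑ t : (Fin N → X) × (Fin N → Y),
      P t * (Real.log (prefXY P (i + 1) i t.1 t.2) + Real.log (prefXY P i 0 t.1 t.2)
        - Real.log (prefXY P i i t.1 t.2) - Real.log (prefXY P (i + 1) 0 t.1 t.2)) :=
    Finset.sum_nonneg fun i _ => hT i
  linarith
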